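/- Let g = ⊕ g^{p,q} be a bigraded complex Lie algebra with bracket-compatible bigrading, κ an invariant nondegenerate symmetric bilinear form with κ(g^{p,q}, g^{r,s}) = 0 unless (p,q)+(r,s)=(0,0). Let N ∈ g^{-1,-1} and suppose {M, Y, N} is an sl2-triple with M ∈ g^{1,1}, and suppose that for all u in c^{-1,0} (the centralizer of N intersected with g^{-1,0}) the Hermitian form i·κ(ad_M u, ad_N ad_M ū) is positive for u ≠ 0 (polarization condition) with NMu = u for such u. Then the (1,1)-form −ω_M defined by −ω_M(u, ū) = i·κ(M, [u, ū]) is positive definite on c^{-1,0}. -/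
import Mathlib


open Complex in
/-- In a bigraded complex Lie algebra with invariant nondegenerate symmetric
form `κ` (orthogonal with respect to the bigrading), given an `sl₂`-triple `{M, Y, N}` with
`N ∈ g^{-1,-1}`, `M ∈ g^{1,1}`, such that `N·M·u = u` on `c^{-1,0}` (the centralizer of `N`
intersected with `g^{-1,0}`) and the Hermitian form `i·κ(ad_M u, ad_N ad_M ū)` is positive
on `c^{-1,0} \ {0}`, the form `-ω_M` with `-ω_M(u,ū) = i·κ(M,[u,ū])` is positive definite
on `c^{-1,0}`. -/
theorem stmt8
    (L : Type*) [LieRing L] [LieAlgebra ℂ L]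
    (g : ℤ → ℤ → Submodule ℂ L)
    (hinternal : DirectSum.IsInternal (fun pq : ℤ × ℤ => g pq.1 pq.2))
    (hbracket : ∀ p q r s : ℤ, ∀ x ∈ g p q, ∀ y ∈ g r s, ⁅x, y⁆ ∈ g (p + r) (q + s))
    (κ : LinearMap.BilinForm ℂ L)
    (hsymm : ∀ x y, κ x y = κ y x)
    (hinv : ∀ x y z : L, κ ⁅x, y⁆ z = κ x ⁅y, z⁆)
    (horth : ∀ p q r s : ℤ, (p + r, q + s) ≠ (0, 0) →
      ∀ x ∈ g p q, ∀ y ∈ g r s, κ x y = 0)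
    (hnondeg : ∀ x : L, (∀ y : L, κ x y = 0) → x = 0)
    (conj : L → L)
    (hconj_add : ∀ x y : L, conj (x + y) = conj x + conj y)
    (hconj_smul : ∀ (z : ℂ) (x : L), conj (z • x) = (starRingEnd ℂ z) • conj x)
    (hconj_gr : ∀ p q : ℤ, ∀ x ∈ g p q, conj x ∈ g q p)
    (M Y N : L)
    (hN : N ∈ g (-1) (-1)) (hM : M ∈ g 1 1)
    (hMN : ⁅M, N⁆ = Y) (hYM : ⁅Y, M⁆ = (2 : ℂ) • M) (hYN : ⁅Y, N⁆ = -((2 : ℂ) • N))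
    (C : Set L)
    (hC : C = {u | ⁅N, u⁆ = 0} ∩ (g (-1) 0 : Set L))
    (hNMu : ∀ u ∈ C, ⁅N, ⁅M, u⁆⁆ = u)
    (hpol : ∀ u ∈ C, u ≠ 0 →
      0 < (I * κ ⁅M, u⁆ ⁅N, ⁅M, conj u⁆⁆).re ∧ (I * κ ⁅M, u⁆ ⁅N, ⁅M, conj u⁆⁆).im = 0) :
    ∀ u ∈ C, u ≠ 0 →
      0 < (I * κ M ⁅u, conj u⁆).re ∧ (I * κ M ⁅u, conj u⁆).im = 0 := by
  intro u hu hne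
  have key : κ M ⁅u, conj u⁆ = κ ⁅M, u⁆ ⁅N, ⁅M, conj u⁆⁆ := by
    calc κ M ⁅u, conj u⁆ = -κ M ⁅conj u, u⁆ := by
          rw [← lie_skew u (conj u), map_neg]
      _ = -κ ⁅M, conj u⁆ u := by rw [hinv M (conj u) u]
      _ = -κ ⁅M, conj u⁆ ⁅N, ⁅M, u⁆⁆ := by rw [hNMu u hu]
      _ = -κ ⁅⁅M, conj u⁆, N⁆ ⁅M, u⁆ := by rw [hinv ⁅M, conj u⁆ N ⁅M, u⁆]
      _ = κ ⁅N, ⁅M, conj u⁆⁆ ⁅M, u⁆ := by rw [← lie_skew N ⁅M, conj u⁆]; simp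
      _ = κ ⁅M, u⁆ ⁅N, ⁅M, conj u⁆⁆ := hsymm _ _
  rw [key]
  exact hpol u hu hne
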